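/- Let μ be a reconciliation map from (T;t,σ) to S and suppose there exist time maps τ_T for T and τ_S for S satisfying: (D1) μ(u)=x ∈ V(S) implies τ_T(u)=τ_S(x); (D2) if x ⪯_S lca_S(σ_{T̄}(u)) for some u with t(u) ∈ {□,△}, then τ_S(x) > τ_T(u); (D3) if lca_S(σ_{T̄}(u) ∪ σ_{T̄}(v)) ⪯_S x for some transfer edge (u,v), then τ_T(u) > τ_S(x). Then there exists a time-consistent reconciliation map μ' from (T;t,σ) to S. -/

import Mathlib

/-- A rooted tree on vertex type `V`, encoded by a parent map.
Edges are directed away from the root; the edge into a non-root vertex `v`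
is `(par v, v)`. -/
structure RTree (V : Type*) where
  root : V
  par : V → V
  par_root : par root = root
  par_ne : ∀ v, v ≠ root → par v ≠ v
  reaches : ∀ v, ∃ k, par^[k] v = root

namespace RTree

variable {V : Type*}

/-- `anc T x y` : `x` is a descendant of `y`, i.e. `x ⪯_T y`. -/
def anc (T : RTree V) (x y : V) : Prop := ∃ k, (T.par)^[k] x = y

/-- strict descendant: `x ≺_T y`. -/
def sanc (T : RTree V) (x y : V) : Prop := T.anc x y ∧ x ≠ y

def IsLeaf (T : RTree V) (v : V) : Prop := ∀ u, T.par u = v → u = v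

/-- `x` is a least common ancestor of the set `A`. -/
def IsLca (T : RTree V) (A : Set V) (x : V) : Prop :=
  (∀ a ∈ A, T.anc a x) ∧ ∀ y, (∀ a ∈ A, T.anc a y) → T.anc x y

/-- A time map: strict descendants have strictly larger time stamps. -/
def IsTimeMap (T : RTree V) (τ : V → ℝ) : Prop :=
  ∀ x y, T.sanc x y → τ y < τ x

end RTree

/-- Event labels: speciation `•`, duplication `□`, HGT `△`, leaf `⊙`. -/
inductive Event where
  | spec | dup | hgt | leaf
deriving DecidableEq

/-- The common setup: a gene tree `T` (vertices `V`) with event labels `t`,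
transfer edges `trans` (an edge is recorded by its child endpoint),
a species tree `S` (vertices `W`), the map `sig = σ` assigning to each gene
(leaf of `T`) the species (leaf of `S`) it resides in, and a least common
ancestor function `lca` on the species tree. -/
structure ReconSetup (V W : Type*) where
  T : RTree V
  S : RTree W
  t : V → Event
  trans : Set V
  sig : V → W
  lca : Set W → W
  trans_ne_root : ∀ v ∈ trans, v ≠ T.root
  trans_hgt : ∀ v ∈ trans, t (T.par v) = Event.hgt
  leaf_iff : ∀ v, T.IsLeaf v ↔ t v = Event.leaf
  sig_leaf : ∀ v, T.IsLeaf v → S.IsLeaf (sig v)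
  lca_spec : ∀ A : Set W, A.Nonempty → S.IsLca A (lca A)

/-- lower endpoint of a vertex-or-edge of the species tree
(an edge `(S.par y, y)` is encoded as `Sum.inr y`; a vertex `x` as `Sum.inl x`). -/
def lowPt {W : Type*} : W ⊕ W → W := Sum.elim id id

namespace ReconSetup

variable {V W : Type*}

/-- ancestor order of the forest `T_{E̅}` obtained by deleting transfer edges. -/
def fanc (R : ReconSetup V W) (x y : V) : Prop :=
  ∃ k, (R.T.par)^[k] x = y ∧ ∀ i < k, (R.T.par)^[i] x ∉ R.trans

def sfanc (R : ReconSetup V W) (x y : V) : Prop := R.fanc x y ∧ x ≠ y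

/-- `σ_{T̅}(u)`: the species of the leaves of `T` below `u` in the forest `T_{E̅}`. -/
def sigmaBar (R : ReconSetup V W) (u : V) : Set W :=
  R.sig '' {l | R.T.IsLeaf l ∧ R.fanc l u}

/-- Ancestor order of `S` extended to vertices and edges:
`z ⪯ (x,y) ↔ z ⪯ y`, `(x,y) ⪯ z ↔ x ⪯ z`, `(x,y) ⪯ (a,b) ↔ y ⪯ b`. -/
def extLE (R : ReconSetup V W) : W ⊕ W → W ⊕ W → Prop
  | Sum.inl a, Sum.inl b => R.S.anc a b
  | Sum.inl a, Sum.inr y => R.S.anc a y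
  | Sum.inr y, Sum.inl b => R.S.anc (R.S.par y) b
  | Sum.inr y, Sum.inr z => R.S.anc y z

def extLT (R : ReconSetup V W) (p q : W ⊕ W) : Prop := R.extLE p q ∧ ¬ R.extLE q p

def incomp (R : ReconSetup V W) (p q : W ⊕ W) : Prop := ¬ R.extLE p q ∧ ¬ R.extLE q p

def IsDupHGT (R : ReconSetup V W) (u : V) : Prop :=
  R.t u = Event.dup ∨ R.t u = Event.hgt

/-- (M1) leaf constraint. -/
def M1 (R : ReconSetup V W) (μ : V → W ⊕ W) : Prop :=
  ∀ u, R.T.IsLeaf u → μ u = Sum.inl (R.sig u)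

/-- (M2i) speciation vertices map to the lca of the species below them. -/
def M2i (R : ReconSetup V W) (μ : V → W ⊕ W) : Prop :=
  ∀ u, R.t u = Event.spec → μ u = Sum.inl (R.lca (R.sigmaBar u))

/-- (M2ii) duplication/HGT vertices map to edges of `S`. -/
def M2ii (R : ReconSetup V W) (μ : V → W ⊕ W) : Prop :=
  ∀ u, R.IsDupHGT u → ∃ y, y ≠ R.S.root ∧ μ u = Sum.inr y

/-- (M2iii) the endpoints of a transfer edge receive incomparable images. -/
def M2iii (R : ReconSetup V W) (μ : V → W ⊕ W) : Prop :=
  ∀ v ∈ R.trans, R.incomp (μ (R.T.par v)) (μ v)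

/-- (M3) ancestor constraint within components of `T_{E̅}`. -/
def M3 (R : ReconSetup V W) (μ : V → W ⊕ W) : Prop :=
  ∀ v w, R.sfanc v w →
    ((R.IsDupHGT v ∧ R.IsDupHGT w) → R.extLE (μ v) (μ w)) ∧
    (¬ (R.IsDupHGT v ∧ R.IsDupHGT w) → R.extLT (μ v) (μ w))

/-- `μ` is a reconciliation map from `(T;t,σ)` to `S`. -/
def IsRecon (R : ReconSetup V W) (μ : V → W ⊕ W) : Prop :=
  R.M1 μ ∧ R.M2i μ ∧ R.M2ii μ ∧ R.M2iii μ ∧ R.M3 μ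

/-- (O1) every internal vertex has at least two children. -/
def O1 (R : ReconSetup V W) : Prop :=
  ∀ v, ¬ R.T.IsLeaf v →
    ∃ a b, a ≠ b ∧ R.T.par a = v ∧ R.T.par b = v ∧ a ≠ v ∧ b ≠ v

/-- (O2) every HGT vertex has a transfer child edge and a non-transfer child edge. -/
def O2 (R : ReconSetup V W) : Prop :=
  ∀ v, R.t v = Event.hgt →
    (∃ c, R.T.par c = v ∧ c ∈ R.trans) ∧ (∃ c, R.T.par c = v ∧ c ≠ v ∧ c ∉ R.trans)

/-- (Σ1) a speciation vertex has two children whose species sets are disjoint. -/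
def Sigma1 (R : ReconSetup V W) : Prop :=
  ∀ x, R.t x = Event.spec →
    ∃ v w, v ≠ w ∧ R.T.par v = x ∧ R.T.par w = x ∧ v ≠ x ∧ w ≠ x ∧
      R.sigmaBar v ∩ R.sigmaBar w = ∅

/-- (Σ2) the species sets across a transfer edge are disjoint. -/
def Sigma2 (R : ReconSetup V W) : Prop :=
  ∀ w ∈ R.trans, R.sigmaBar (R.T.par w) ∩ R.sigmaBar w = ∅

/-- the gene tree is binary. -/
def BinaryT (R : ReconSetup V W) : Prop :=
  ∀ v, ¬ R.T.IsLeaf v →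
    ∃ a b, a ≠ b ∧ ∀ c, (R.T.par c = v ∧ c ≠ v) ↔ (c = a ∨ c = b)

/-- the species tree is binary. -/
def BinaryS (R : ReconSetup V W) : Prop :=
  ∀ v, ¬ R.S.IsLeaf v →
    ∃ a b, a ≠ b ∧ ∀ c, (R.S.par c = v ∧ c ≠ v) ↔ (c = a ∨ c = b)

/-- (C1) speciation vertices and leaves get the same time as their image. -/
def C1 (R : ReconSetup V W) (μ : V → W ⊕ W) (τT : V → ℝ) (τS : W → ℝ) : Prop :=
  ∀ u x, (R.t u = Event.spec ∨ R.t u = Event.leaf) → μ u = Sum.inl x → τT u = τS x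

/-- (C2) a vertex mapped into an edge `(x,y)` gets a time strictly between
the times of `x` and `y`. -/
def C2 (R : ReconSetup V W) (μ : V → W ⊕ W) (τT : V → ℝ) (τS : W → ℝ) : Prop :=
  ∀ u y, R.IsDupHGT u → μ u = Sum.inr y → τS (R.S.par y) < τT u ∧ τT u < τS y

/-- `μ` is a time-consistent reconciliation map. -/
def TimeConsistent (R : ReconSetup V W) (μ : V → W ⊕ W) : Prop :=
  ∃ τT τS, R.T.IsTimeMap τT ∧ R.S.IsTimeMap τS ∧ R.C1 μ τT τS ∧ R.C2 μ τT τS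

/-- (D1). -/
def D1 (R : ReconSetup V W) (μ : V → W ⊕ W) (τT : V → ℝ) (τS : W → ℝ) : Prop :=
  ∀ u x, μ u = Sum.inl x → τT u = τS x

/-- (D2). -/
def D2 (R : ReconSetup V W) (τT : V → ℝ) (τS : W → ℝ) : Prop :=
  ∀ u x, R.IsDupHGT u → R.S.anc x (R.lca (R.sigmaBar u)) → τT u < τS x

/-- (D3), for a transfer edge `(T.par v, v)` with `v ∈ trans`. -/
def D3 (R : ReconSetup V W) (τT : V → ℝ) (τS : W → ℝ) : Prop :=
  ∀ v x, v ∈ R.trans →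
    R.S.anc (R.lca (R.sigmaBar (R.T.par v) ∪ R.sigmaBar v)) x → τS x < τT (R.T.par v)

/-- The DTL-scenario axioms (I)-(IV) for a map `γ : V(T) → V(S)`. -/
def DTL (R : ReconSetup V W) (γ : V → W) : Prop :=
  (∀ u, R.T.IsLeaf u → γ u = R.sig u) ∧
  (∀ u v w, v ≠ w → R.T.par v = u → R.T.par w = u → v ≠ u → w ≠ u →
    ((¬ R.S.sanc (γ u) (γ v) ∧ ¬ R.S.sanc (γ u) (γ w)) ∧
     (R.S.anc (γ v) (γ u) ∨ R.S.anc (γ w) (γ u)))) ∧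
  (∀ v, v ≠ R.T.root →
    (v ∈ R.trans ↔ (¬ R.S.anc (γ (R.T.par v)) (γ v) ∧ ¬ R.S.anc (γ v) (γ (R.T.par v))))) ∧
  (∀ u v w, v ≠ w → R.T.par v = u → R.T.par w = u → v ≠ u → w ≠ u →
    ((R.t u = Event.hgt ↔ (v ∈ R.trans ∨ w ∈ R.trans)) ∧
     (R.t u = Event.spec →
       γ u = R.lca {γ v, γ w} ∧ ¬ R.S.anc (γ v) (γ w) ∧ ¬ R.S.anc (γ w) (γ v)) ∧
     (R.t u = Event.dup → R.S.anc (R.lca {γ v, γ w}) (γ u))))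

end ReconSetup

/-- A directed graph (relation) is acyclic: no edge closes a directed cycle. -/
def Acyclic {α : Type*} (r : α → α → Prop) : Prop :=
  ∀ x y, r x y → ¬ Relation.ReflTransGen r y x

section AuxLemmas

namespace RTree

variable {V : Type*} (T : RTree V)

theorem anc_refl' (x : V) : T.anc x x := ⟨0, rfl⟩

theorem anc_trans' {x y z : V} (h1 : T.anc x y) (h2 : T.anc y z) : T.anc x z := by
  obtain ⟨i, hi⟩ := h1; obtain ⟨j, hj⟩ := h2
  exact ⟨j + i, by rw [Function.iterate_add_apply, hi, hj]⟩

theorem anc_root' (x : V) : T.anc x T.root := T.reaches x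

theorem eq_root_of_root_anc {x : V} (h : T.anc T.root x) : x = T.root := by
  obtain ⟨k, hk⟩ := h
  rw [Function.iterate_fixed T.par_root] at hk
  exact hk.symm

theorem anc_par' {x y : V} (h : T.anc x y) (hne : x ≠ y) : T.anc (T.par x) y := by
  obtain ⟨k, hk⟩ := h
  cases k with
  | zero => exact absurd hk hne
  | succ n => exact ⟨n, by rwa [Function.iterate_succ_apply] at hk⟩

theorem time_le {τ : V → ℝ} (hτ : T.IsTimeMap τ) {x y : V} (h : T.anc x y) : τ y ≤ τ x := by
  by_cases hxy : x = y
  · subst hxy; exact le_refl _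
  · exact (hτ x y ⟨h, hxy⟩).le

theorem anc_antisymm' {τ : V → ℝ} (hτ : T.IsTimeMap τ) {x y : V}
    (h1 : T.anc x y) (h2 : T.anc y x) : x = y := by
  by_contra hne
  have ha := hτ x y ⟨h1, hne⟩
  have hb := hτ y x ⟨h2, Ne.symm hne⟩
  linarith

theorem anc_total' {x y z : V} (h1 : T.anc z x) (h2 : T.anc z y) : T.anc x y ∨ T.anc y x := by
  obtain ⟨i, hi⟩ := h1; obtain ⟨j, hj⟩ := h2
  rcases le_total i j with h | h
  · left; exact ⟨j - i, by rw [← hi, ← Function.iterate_add_apply, Nat.sub_add_cancel h, hj]⟩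
  · right; exact ⟨i - j, by rw [← hj, ← Function.iterate_add_apply, Nat.sub_add_cancel h, hi]⟩

theorem eq_of_leaf_anc {y : V} (hy : T.IsLeaf y) : ∀ (k : ℕ) (x : V), (T.par)^[k] x = y → x = y := by
  intro k
  induction k with
  | zero => intro x hx; exact hx
  | succ n ih =>
    intro x hx
    rw [Function.iterate_succ_apply] at hx
    exact hy x (ih (T.par x) hx)

end RTree

namespace ReconSetup

variable {V W : Type*} (R : ReconSetup V W)

theorem fanc_refl' (x : V) : R.fanc x x := ⟨0, rfl, fun i hi => absurd hi (Nat.not_lt_zero i)⟩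

theorem fanc_anc' {x y : V} (h : R.fanc x y) : R.T.anc x y := ⟨h.choose, h.choose_spec.1⟩

theorem fanc_trans' {x y z : V} (h1 : R.fanc x y) (h2 : R.fanc y z) : R.fanc x z := by
  obtain ⟨i, hi, gi⟩ := h1; obtain ⟨j, hj, gj⟩ := h2
  refine ⟨j + i, by rw [Function.iterate_add_apply, hi, hj], ?_⟩
  intro k hk
  by_cases hki : k < i
  · exact gi k hki
  · have hrw : (R.T.par)^[k] x = (R.T.par)^[k - i] y := by
      rw [← hi, ← Function.iterate_add_apply, Nat.sub_add_cancel (le_of_not_gt hki)]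
    rw [hrw]; exact gj _ (by omega)

theorem fanc_step {v : V} (hv : v ∉ R.trans) : R.fanc v (R.T.par v) := by
  refine ⟨1, by simp, ?_⟩
  intro i hi
  interval_cases i
  simpa using hv

theorem sigmaBar_mono' {v w : V} (h : R.fanc v w) : R.sigmaBar v ⊆ R.sigmaBar w := by
  rintro s ⟨l, ⟨hl, hf⟩, rfl⟩
  exact ⟨l, ⟨hl, R.fanc_trans' hf h⟩, rfl⟩

theorem mem_sigmaBar_self {v : V} (hv : R.T.IsLeaf v) : R.sig v ∈ R.sigmaBar v :=
  ⟨v, ⟨hv, R.fanc_refl' v⟩, rfl⟩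

theorem sigmaBar_leaf {v : V} (hv : R.T.IsLeaf v) {s : W} (hs : s ∈ R.sigmaBar v) :
    s = R.sig v := by
  obtain ⟨l, ⟨hl, hf⟩, rfl⟩ := hs
  obtain ⟨k, hk⟩ := R.fanc_anc' hf
  rw [R.T.eq_of_leaf_anc hv k l hk]

theorem exists_leaf_fanc [Fintype V] (τT : V → ℝ)
    (hτT : R.T.IsTimeMap τT) (hO1 : R.O1) (hO2 : R.O2) (u : V) :
    ∃ l, R.T.IsLeaf l ∧ R.fanc l u := by
  classical
  generalize hn : (Finset.univ.filter (fun w => R.T.sanc w u)).card = n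
  induction n using Nat.strong_induction_on generalizing u with
  | _ n ih =>
  by_cases hu : R.T.IsLeaf u
  · exact ⟨u, hu, R.fanc_refl' u⟩
  · have hc : ∃ c, R.T.par c = u ∧ c ≠ u ∧ c ∉ R.trans := by
      by_cases hh : R.t u = Event.hgt
      · obtain ⟨_, c, hc1, hc2, hc3⟩ := hO2 u hh
        exact ⟨c, hc1, hc2, hc3⟩
      · obtain ⟨a, b, hab, ha, hb, ha', hb'⟩ := hO1 u hu
        refine ⟨a, ha, ha', fun hat => hh ?_⟩
        have h2 := R.trans_hgt a hat
        rwa [ha] at h2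
    obtain ⟨c, hc1, hc2, hc3⟩ := hc
    have hsanc : R.T.sanc c u := ⟨⟨1, by simpa using hc1⟩, hc2⟩
    have hsub : Finset.univ.filter (fun w => R.T.sanc w c) ⊂
        Finset.univ.filter (fun w => R.T.sanc w u) := by
      constructor
      · intro w hw
        simp only [Finset.mem_filter, Finset.mem_univ, true_and] at *
        refine ⟨R.T.anc_trans' hw.1 hsanc.1, ?_⟩
        intro hwu; subst hwu
        have h1 := hτT w c hw
        have h2 := hτT c w hsanc
        linarith
      · intro hsub'
        have hcmem : c ∈ Finset.univ.filter (fun w => R.T.sanc w u) := by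
          simp [hsanc]
        have hcc := hsub' hcmem
        simp only [Finset.mem_filter, Finset.mem_univ, true_and] at hcc
        exact hcc.2 rfl
    obtain ⟨l, hl, hf⟩ := ih _ (by rw [← hn]; exact Finset.card_lt_card hsub) c rfl
    exact ⟨l, hl, R.fanc_trans' hf (hc1 ▸ R.fanc_step hc3)⟩

end ReconSetup

end AuxLemmas


/-- if a reconciliation map `μ` admits time maps `τ_T, τ_S`
satisfying (D1)-(D3), then there exists a time-consistent reconciliation map `μ'`
from `(T;t,σ)` to `S`. -/
theorem stmt11 {V W : Type*} [Fintype V] [Fintype W]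
    (R : ReconSetup V W) (μ : V → W ⊕ W) (hrec : R.IsRecon μ)
    (hO1 : R.O1) (hO2 : R.O2) (hS1 : R.Sigma1) (hS2 : R.Sigma2)
    (τT : V → ℝ) (τS : W → ℝ)
    (hτT : R.T.IsTimeMap τT) (hτS : R.S.IsTimeMap τS)
    (hD1 : R.D1 μ τT τS) (hD2 : R.D2 τT τS) (hD3 : R.D3 τT τS) :
    ∃ μ', R.IsRecon μ' ∧ R.TimeConsistent μ' := by
  classical
  obtain ⟨hM1, hM2i, hM2ii, hM2iii, hM3⟩ := hrec
  have hσne : ∀ u : V, (R.sigmaBar u).Nonempty := by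
    intro u
    obtain ⟨l, hl, hf⟩ := R.exists_leaf_fanc τT hτT hO1 hO2 u
    exact ⟨R.sig l, l, ⟨hl, hf⟩, rfl⟩
  have hlca1 : ∀ u : V, ∀ s ∈ R.sigmaBar u, R.S.anc s (R.lca (R.sigmaBar u)) :=
    fun u => (R.lca_spec _ (hσne u)).1
  have hlca2 : ∀ u : V, ∀ y, (∀ s ∈ R.sigmaBar u, R.S.anc s y) →
      R.S.anc (R.lca (R.sigmaBar u)) y :=
    fun u => (R.lca_spec _ (hσne u)).2
  have hndspec : ∀ u, R.t u = Event.spec → ¬ R.IsDupHGT u := by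
    intro u h hd; rcases hd with h' | h' <;> rw [h] at h' <;> exact Event.noConfusion h'
  have hndleaf : ∀ u, R.t u = Event.leaf → ¬ R.IsDupHGT u := by
    intro u h hd; rcases hd with h' | h' <;> rw [h] at h' <;> exact Event.noConfusion h'
  -- only the root of T can be mapped onto the root of S
  have hroot_only : ∀ u, μ u = Sum.inl R.S.root → u = R.T.root := by
    intro u hu
    by_contra hne
    have hpar : R.T.par u ≠ u := R.T.par_ne u hne
    have hext : R.extLE (μ (R.T.par u)) (μ u) := by
      rcases hμp : μ (R.T.par u) with a | y <;> rw [hu]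
      · show R.S.anc a R.S.root
        exact R.S.anc_root' a
      · show R.S.anc (R.S.par y) R.S.root
        exact R.S.anc_root' _
    by_cases ht : u ∈ R.trans
    · exact (hM2iii u ht).1 hext
    · have hsf : R.sfanc u (R.T.par u) := ⟨R.fanc_step ht, Ne.symm hpar⟩
      have hnd : ¬ R.IsDupHGT u := by
        intro hd
        obtain ⟨y, _, hy⟩ := hM2ii u hd
        rw [hu] at hy; cases hy
      exact ((hM3 u (R.T.par u) hsf).2 (fun hb => hnd hb.1)).2 hext
  -- the lca of the species set below a dup/HGT vertex is not the root of S
  have hzne : ∀ u, R.IsDupHGT u → R.lca (R.sigmaBar u) ≠ R.S.root := by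
    intro u hu h
    obtain ⟨y, hy0, hy⟩ := hM2ii u hu
    have hanc : ∀ s ∈ R.sigmaBar u, R.S.anc s y := by
      rintro s ⟨l, ⟨hl, hf⟩, rfl⟩
      have hlleaf := (R.leaf_iff l).1 hl
      have hlu : l ≠ u := by
        intro h'; subst h'
        rcases hu with h'' | h'' <;> rw [hlleaf] at h'' <;> exact Event.noConfusion h''
      have hlt := (hM3 l u ⟨hf, hlu⟩).2 (fun hb => absurd hb.1 (hndleaf l hlleaf))
      have hμl := hM1 l hl
      rw [hμl, hy] at hlt
      exact hlt.1
    have hly := hlca2 u y hanc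
    rw [h] at hly
    exact hy0 (R.S.eq_root_of_root_anc hly)
  -- the finite set of all time values
  set A : Finset ℝ := Finset.univ.image τT ∪ Finset.univ.image τS with hA
  have hAne : A.Nonempty := ⟨τT R.T.root, by simp [hA]⟩
  set m : ℝ := A.min' hAne with hm
  have hTA : ∀ u, τT u ∈ A := by intro u; simp [hA]
  have hSA : ∀ w, τS w ∈ A := by intro w; simp [hA]
  have hmle : ∀ a ∈ A, m ≤ a := fun a ha => Finset.min'_le A a ha
  obtain ⟨ε, hε0, hεhalf, hgap⟩ :
      ∃ ε : ℝ, 0 < ε ∧ ε ≤ 1/2 ∧ ∀ a ∈ A, ∀ b ∈ A, a < b → a + 2*ε ≤ b := by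
    set G : Finset ℝ := ((A ×ˢ A).filter (fun p => p.1 < p.2)).image (fun p => p.2 - p.1)
      with hG
    have hmemG : ∀ a ∈ A, ∀ b ∈ A, a < b → b - a ∈ G := by
      intro a ha b hb hab
      exact Finset.mem_image.2 ⟨(a, b),
        Finset.mem_filter.2 ⟨Finset.mem_product.2 ⟨ha, hb⟩, hab⟩, rfl⟩
    by_cases hGne : G.Nonempty
    · have hGpos : 0 < G.min' hGne := by
        have hmem := G.min'_mem hGne
        obtain ⟨p, hp, he⟩ := Finset.mem_image.1 hmem
        have h2 := (Finset.mem_filter.1 hp).2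
        linarith
      refine ⟨min (G.min' hGne / 2) (1/2), by positivity, min_le_right _ _, ?_⟩
      intro a ha b hb hab
      have h1 := G.min'_le _ (hmemG a ha b hb hab)
      have h2 : min (G.min' hGne / 2) (1/2) ≤ G.min' hGne / 2 := min_le_left _ _
      linarith
    · refine ⟨1/2, by norm_num, le_refl _, ?_⟩
      intro a ha b hb hab
      exact absurd ⟨_, hmemG a ha b hb hab⟩ hGne
  -- the modified time maps
  set τS2 : W → ℝ := fun w => if w = R.S.root then m - 1 else τS w with hS2def
  set τT2 : V → ℝ := fun u => if μ u = Sum.inl R.S.root then m - 1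
    else if R.IsDupHGT u then τT u - ε else τT u with hT2def
  have hτS2r : τS2 R.S.root = m - 1 := by simp [hS2def]
  have hτS2n : ∀ w, w ≠ R.S.root → τS2 w = τS w := by intro w hw; simp [hS2def, hw]
  have hτT2dup : ∀ u, R.IsDupHGT u → τT2 u = τT u - ε := by
    intro u hu
    obtain ⟨y, _, hy⟩ := hM2ii u hu
    simp [hT2def, hy, hu]
  have hτT2nd : ∀ u, ¬ R.IsDupHGT u → μ u ≠ Sum.inl R.S.root → τT2 u = τT u := by
    intro u h1 h2; simp [hT2def, h1, h2]
  have hτT2r : ∀ u, μ u = Sum.inl R.S.root → τT2 u = m - 1 := by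
    intro u h; simp [hT2def, h]
  have hτT2lb : ∀ u, R.IsDupHGT u → m - 1 < τT2 u := by
    intro u hu; rw [hτT2dup u hu]
    have := hmle _ (hTA u); linarith
  have hτS2map : R.S.IsTimeMap τS2 := by
    intro x y hxy
    by_cases hy : y = R.S.root
    · subst hy
      rw [hτS2r, hτS2n x hxy.2]
      have := hmle _ (hSA x); linarith
    · have hx : x ≠ R.S.root := by
        intro h; subst h
        exact hy (R.S.eq_root_of_root_anc hxy.1)
      rw [hτS2n x hx, hτS2n y hy]
      exact hτS x y hxy
  have hτT2map : R.T.IsTimeMap τT2 := by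
    intro x y hxy
    have hord := hτT x y hxy
    have hg := hgap _ (hTA y) _ (hTA x) hord
    have hxr : μ x ≠ Sum.inl R.S.root := by
      intro h
      have hx := hroot_only x h
      subst hx
      exact hxy.2 (R.T.eq_root_of_root_anc hxy.1).symm
    by_cases hyr : μ y = Sum.inl R.S.root
    · rw [hτT2r y hyr]
      have hlb1 := hmle _ (hTA x)
      by_cases hdx : R.IsDupHGT x
      · rw [hτT2dup x hdx]; linarith
      · rw [hτT2nd x hdx hxr]; linarith
    · have h1 : τT2 y ≤ τT y := by
        by_cases hdy : R.IsDupHGT y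
        · rw [hτT2dup y hdy]; linarith
        · rw [hτT2nd y hdy hyr]
      have h2 : τT x - ε ≤ τT2 x := by
        by_cases hdx : R.IsDupHGT x
        · rw [hτT2dup x hdx]
        · rw [hτT2nd x hdx hxr]; linarith
      linarith
  -- sharpened (D2) and (D3)
  have hD2' : ∀ u, R.IsDupHGT u → τT2 u < τS2 (R.lca (R.sigmaBar u)) := by
    intro u hu
    have h1 := hD2 u (R.lca (R.sigmaBar u)) hu (R.S.anc_refl' _)
    rw [hτT2dup u hu, hτS2n _ (hzne u hu)]
    linarith
  have hD3' : ∀ v ∈ R.trans, ∀ b,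
      R.S.anc (R.lca (R.sigmaBar (R.T.par v) ∪ R.sigmaBar v)) b →
      τS2 b < τT2 (R.T.par v) := by
    intro v hv b hb
    have hp : R.IsDupHGT (R.T.par v) := Or.inr (R.trans_hgt v hv)
    have h1 := hD3 v b hv hb
    rw [hτT2dup _ hp]
    by_cases hbr : b = R.S.root
    · subst hbr
      rw [hτS2r]
      have := hmle _ (hTA (R.T.par v)); linarith
    · rw [hτS2n b hbr]
      have hg := hgap _ (hSA b) _ (hTA (R.T.par v)) h1
      linarith
  -- choice of a new image edge for every dup/HGT vertex
  have key : ∀ u, ∃ y, R.IsDupHGT u → y ≠ R.S.root ∧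
      R.S.anc (R.lca (R.sigmaBar u)) y ∧ τS2 (R.S.par y) < τT2 u ∧ τT2 u < τS2 y := by
    intro u
    by_cases hu : R.IsDupHGT u
    · have hex : ∃ j, τS2 (R.S.par ((R.S.par)^[j] (R.lca (R.sigmaBar u)))) < τT2 u := by
        obtain ⟨k, hk⟩ := R.S.reaches (R.lca (R.sigmaBar u))
        refine ⟨k, ?_⟩
        rw [hk, R.S.par_root, hτS2r]
        exact hτT2lb u hu
      refine ⟨(R.S.par)^[Nat.find hex] (R.lca (R.sigmaBar u)), fun _ => ?_⟩
      have h1 : τS2 (R.S.par ((R.S.par)^[Nat.find hex] (R.lca (R.sigmaBar u)))) < τT2 u :=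
        Nat.find_spec hex
      have h2 : τT2 u < τS2 ((R.S.par)^[Nat.find hex] (R.lca (R.sigmaBar u))) := by
        rcases Nat.eq_zero_or_pos (Nat.find hex) with hj0 | hjpos
        · rw [hj0]
          simpa using hD2' u hu
        · have hnot := Nat.find_min hex (show Nat.find hex - 1 < Nat.find hex by omega)
          push_neg at hnot
          have heq : R.S.par ((R.S.par)^[Nat.find hex - 1] (R.lca (R.sigmaBar u))) =
              (R.S.par)^[Nat.find hex] (R.lca (R.sigmaBar u)) := by
            have h5 : Nat.find hex = (Nat.find hex - 1) + 1 := by omega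
            conv_rhs => rw [h5, Function.iterate_succ_apply']
          rw [heq] at hnot
          rcases lt_or_eq_of_le hnot with h | h
          · exact h
          · exfalso
            have hyr : (R.S.par)^[Nat.find hex] (R.lca (R.sigmaBar u)) ≠ R.S.root := by
              intro hr
              rw [hr, hτS2r] at h
              have := hτT2lb u hu; linarith
            have e2 := hτT2dup u hu
            rw [hτS2n _ hyr] at h
            have hlt : τS ((R.S.par)^[Nat.find hex] (R.lca (R.sigmaBar u))) < τT u := by
              linarith
            have hg := hgap _ (hSA _) _ (hTA u) hlt
            linarith
      have hyr : (R.S.par)^[Nat.find hex] (R.lca (R.sigmaBar u)) ≠ R.S.root := by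
        intro hr
        rw [hr, hτS2r] at h2
        have := hτT2lb u hu; linarith
      exact ⟨hyr, ⟨Nat.find hex, rfl⟩, h1, h2⟩
    · exact ⟨R.S.root, fun h => absurd h hu⟩
  choose Y hY using key
  set μ' : V → W ⊕ W := fun u => if R.IsDupHGT u then Sum.inr (Y u) else μ u with hμ'def
  have hμ'd : ∀ u, R.IsDupHGT u → μ' u = Sum.inr (Y u) := by
    intro u hu; simp [hμ'def, hu]
  have hμ'n : ∀ u, ¬ R.IsDupHGT u → μ' u = μ u := by
    intro u hu; simp [hμ'def, hu]
  -- images of non-dup/HGT vertices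
  have himg : ∀ v, ¬ R.IsDupHGT v → ∃ x, μ v = Sum.inl x ∧
      R.S.anc x (R.lca (R.sigmaBar v)) ∧ (∀ s ∈ R.sigmaBar v, R.S.anc s x) ∧
      (x ≠ R.S.root → τT2 v = τS2 x) := by
    intro v hv
    have hcase : R.t v = Event.spec ∨ R.t v = Event.leaf := by
      rcases htv : R.t v with _ | _ | _ | _
      · exact Or.inl rfl
      · exact absurd (Or.inl htv) hv
      · exact absurd (Or.inr htv) hv
      · exact Or.inr rfl
    rcases hcase with hsv | hlv
    · have hx := hM2i v hsv
      refine ⟨R.lca (R.sigmaBar v), hx, R.S.anc_refl' _, hlca1 v, ?_⟩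
      intro hxr
      have hne : μ v ≠ Sum.inl R.S.root := by
        rw [hx]; intro h; exact hxr (Sum.inl.inj h)
      rw [hτT2nd v hv hne, hτS2n _ hxr]
      exact hD1 v _ hx
    · have hleaf := (R.leaf_iff v).2 hlv
      have hx := hM1 v hleaf
      refine ⟨R.sig v, hx, hlca1 v _ (R.mem_sigmaBar_self hleaf), ?_, ?_⟩
      · intro s hs
        rw [R.sigmaBar_leaf hleaf hs]
        exact R.S.anc_refl' _
      · intro hxr
        have hne : μ v ≠ Sum.inl R.S.root := by
          rw [hx]; intro h; exact hxr (Sum.inl.inj h)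
        rw [hτT2nd v hv hne, hτS2n _ hxr]
        exact hD1 v _ hx
  -- monotonicity of lca's along the forest order
  have hmono : ∀ v w, R.sfanc v w →
      R.S.anc (R.lca (R.sigmaBar v)) (R.lca (R.sigmaBar w)) := by
    intro v w hvw
    exact hlca2 v _ (fun s hs => hlca1 w s (R.sigmaBar_mono' hvw.1 hs))
  have hUanc : ∀ v b, R.S.anc (R.lca (R.sigmaBar (R.T.par v))) b →
      (∀ s ∈ R.sigmaBar v, R.S.anc s b) →
      R.S.anc (R.lca (R.sigmaBar (R.T.par v) ∪ R.sigmaBar v)) b := by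
    intro v b h1 h2
    refine (R.lca_spec _ ((hσne (R.T.par v)).inl)).2 b ?_
    intro s hs
    rcases hs with hs | hs
    · exact R.S.anc_trans' (hlca1 _ s hs) h1
    · exact h2 s hs
  refine ⟨μ', ⟨?_, ?_, ?_, ?_, ?_⟩, τT2, τS2, hτT2map, hτS2map, ?_, ?_⟩
  · -- M1
    intro u hu
    rw [hμ'n u (hndleaf u ((R.leaf_iff u).1 hu))]
    exact hM1 u hu
  · -- M2i
    intro u hu
    rw [hμ'n u (hndspec u hu)]
    exact hM2i u hu
  · -- M2ii
    intro u hu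
    exact ⟨Y u, (hY u hu).1, hμ'd u hu⟩
  · -- M2iii
    intro v hv
    have hp : R.IsDupHGT (R.T.par v) := Or.inr (R.trans_hgt v hv)
    have hvnr : v ≠ R.T.root := R.trans_ne_root v hv
    have hsvp : R.T.sanc v (R.T.par v) :=
      ⟨⟨1, by simp⟩, fun h => (R.T.par_ne v hvnr) h.symm⟩
    have htlt : τT2 (R.T.par v) < τT2 v := hτT2map v _ hsvp
    have hCa := (hY _ hp).2.2.1
    have hCb := (hY _ hp).2.2.2
    have hz1 := (hY _ hp).2.1
    by_cases hdv : R.IsDupHGT v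
    · rw [hμ'd _ hp, hμ'd v hdv]
      have hCb' := (hY v hdv).2.2.2
      have hz2 := (hY v hdv).2.1
      refine ⟨?_, ?_⟩
      · intro h
        have hab : R.S.anc (Y (R.T.par v)) (Y v) := h
        have hanc : R.S.anc (R.lca (R.sigmaBar (R.T.par v) ∪ R.sigmaBar v)) (Y v) :=
          hUanc v _ (R.S.anc_trans' hz1 hab)
            (fun s hs => R.S.anc_trans' (hlca1 v s hs) hz2)
        have := hD3' v hv _ hanc
        linarith
      · intro h
        have hba : R.S.anc (Y v) (Y (R.T.par v)) := h
        have hanc : R.S.anc (R.lca (R.sigmaBar (R.T.par v) ∪ R.sigmaBar v))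
            (Y (R.T.par v)) :=
          hUanc v _ hz1
            (fun s hs => R.S.anc_trans' (hlca1 v s hs) (R.S.anc_trans' hz2 hba))
        have := hD3' v hv _ hanc
        linarith
    · rw [hμ'd _ hp, hμ'n v hdv]
      obtain ⟨x, hμv, hxz, hsx, hxt⟩ := himg v hdv
      rw [hμv]
      have hxr : x ≠ R.S.root := by
        intro h; rw [h] at hμv
        exact hvnr (hroot_only v hμv)
      have hτvx := hxt hxr
      refine ⟨?_, ?_⟩
      · intro h
        have h' : R.S.anc (R.S.par (Y (R.T.par v))) x := h
        have hle := R.S.time_le hτS2map h'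
        linarith
      · intro h
        have h' : R.S.anc x (Y (R.T.par v)) := h
        have hanc : R.S.anc (R.lca (R.sigmaBar (R.T.par v) ∪ R.sigmaBar v))
            (Y (R.T.par v)) :=
          hUanc v _ hz1 (fun s hs => R.S.anc_trans' (hsx s hs) h')
        have := hD3' v hv _ hanc
        linarith
  · -- M3
    intro v w hvw
    have hsvw : R.T.sanc v w := ⟨R.fanc_anc' hvw.1, hvw.2⟩
    have htlt : τT2 w < τT2 v := hτT2map v w hsvw
    have hzz := hmono v w hvw
    constructor
    · rintro ⟨hdv, hdw⟩
      rw [hμ'd v hdv, hμ'd w hdw]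
      show R.S.anc (Y v) (Y w)
      have hzv := (hY v hdv).2.1
      have hzw := (hY w hdw).2.1
      have hbothanc : R.S.anc (R.lca (R.sigmaBar v)) (Y w) := R.S.anc_trans' hzz hzw
      rcases R.S.anc_total' hzv hbothanc with h | h
      · exact h
      · by_cases heq : Y w = Y v
        · rw [← heq]; exact R.S.anc_refl' _
        · exfalso
          have hpar := R.S.anc_par' h heq
          have hle := R.S.time_le hτS2map hpar
          have h1 := (hY v hdv).2.2.2
          have h2 := (hY w hdw).2.2.1
          linarith
    · intro hnb
      by_cases hdv : R.IsDupHGT v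
      · have hdw : ¬ R.IsDupHGT w := fun h => hnb ⟨hdv, h⟩
        rw [hμ'd v hdv, hμ'n w hdw]
        have hwnl : ¬ R.T.IsLeaf w := by
          intro hl
          obtain ⟨k, hk⟩ := R.fanc_anc' hvw.1
          exact hvw.2 (R.T.eq_of_leaf_anc hl k v hk)
        have hws : R.t w = Event.spec := by
          rcases htw : R.t w with _ | _ | _ | _
          · rfl
          · exact absurd (Or.inl htw) hdw
          · exact absurd (Or.inr htw) hdw
          · exact absurd ((R.leaf_iff w).2 htw) hwnl
        have hμw := hM2i w hws
        rw [hμw]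
        have hzv := (hY v hdv).2.1
        have hCb := (hY v hdv).2.2.2
        by_cases hxr : R.lca (R.sigmaBar w) = R.S.root
        · refine ⟨?_, ?_⟩
          · show R.S.anc (R.S.par (Y v)) (R.lca (R.sigmaBar w))
            rw [hxr]; exact R.S.anc_root' _
          · show ¬ R.S.anc (R.lca (R.sigmaBar w)) (Y v)
            rw [hxr]
            intro h
            exact (hY v hdv).1 (R.S.eq_root_of_root_anc h)
        · have hτwx : τT2 w = τS2 (R.lca (R.sigmaBar w)) := by
            have hne : μ w ≠ Sum.inl R.S.root := by
              rw [hμw]; intro h; exact hxr (Sum.inl.inj h)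
            rw [hτT2nd w hdw hne, hτS2n _ hxr]
            exact hD1 w _ hμw
          have hlt : τS2 (R.lca (R.sigmaBar w)) < τS2 (Y v) := by linarith
          have hancYx : R.S.anc (Y v) (R.lca (R.sigmaBar w)) := by
            rcases R.S.anc_total' hzz hzv with h | h
            · exfalso; have := R.S.time_le hτS2map h; linarith
            · exact h
          have hne' : Y v ≠ R.lca (R.sigmaBar w) := by
            intro h; rw [h] at hlt; exact lt_irrefl _ hlt
          refine ⟨R.S.anc_par' hancYx hne', ?_⟩
          show ¬ R.S.anc (R.lca (R.sigmaBar w)) (Y v)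
          intro h
          have := R.S.time_le hτS2map h
          linarith
      · rw [hμ'n v hdv]
        by_cases hdw : R.IsDupHGT w
        · obtain ⟨x, hμv, hxz, hsx, hxt⟩ := himg v hdv
          rw [hμv]
          have hxr : x ≠ R.S.root := by
            intro h
            rw [h] at hμv
            have hveq := hroot_only v hμv
            subst hveq
            exact hvw.2 (R.T.eq_root_of_root_anc (R.fanc_anc' hvw.1)).symm
          have hτvx := hxt hxr
          rw [hμ'd w hdw]
          have hzw := (hY w hdw).2.1
          have hCa := (hY w hdw).2.2.1
          refine ⟨?_, ?_⟩
          · show R.S.anc x (Y w)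
            exact R.S.anc_trans' (R.S.anc_trans' hxz hzz) hzw
          · show ¬ R.S.anc (R.S.par (Y w)) x
            intro h
            have := R.S.time_le hτS2map h
            linarith
        · rw [hμ'n w hdw]
          exact (hM3 v w hvw).2 hnb
  · -- C1
    intro u x htu hμ'u
    have hnd : ¬ R.IsDupHGT u := by
      rcases htu with h | h
      · exact hndspec u h
      · exact hndleaf u h
    rw [hμ'n u hnd] at hμ'u
    by_cases hxr : x = R.S.root
    · rw [hτT2r u (by rw [hμ'u, hxr]), hxr, hτS2r]
    · have hne : μ u ≠ Sum.inl R.S.root := by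
        rw [hμ'u]; intro h; exact hxr (Sum.inl.inj h)
      rw [hτT2nd u hnd hne, hτS2n _ hxr]
      exact hD1 u x hμ'u
  · -- C2
    intro u y hu hμ'u
    rw [hμ'd u hu] at hμ'u
    have hy := Sum.inr.inj hμ'u
    rw [← hy]
    exact ⟨(hY u hu).2.2.1, (hY u hu).2.2.2⟩
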